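/- Let d ≥ 1 and let g : ℝ^d → ℝ be a function in H¹(ℝ^d). Then there is a constant C depending only on d such that ‖g‖_{L²(ℝ^d)} ≤ C ( ‖(|x|/(1+|x|)) g‖_{L²(ℝ^d)} + ‖(|x|/(1+|x|)) ∇g‖_{L²(ℝ^d)} ). -/

import Mathlib

open MeasureTheory Filter Set ENNReal

lemma limit_zero (v : ℝ → ℝ)
    (h2 : ∫⁻ t, ENNReal.ofReal (v t ^ 2) < ⊤) (L : ℝ)
    (hL : Tendsto (fun t => v t ^ 2 * (t/(1+t^2))) atTop (nhds L)) : L = 0 := by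
  by_contra hne
  have hphi_nonneg : ∀ t : ℝ, 0 ≤ t → 0 ≤ t/(1+t^2) := fun t ht => by positivity
  have hL0 : 0 ≤ L := by
    refine ge_of_tendsto hL ?_
    filter_upwards [eventually_ge_atTop (0:ℝ)] with t ht
    exact mul_nonneg (sq_nonneg _) (hphi_nonneg t ht)
  have hLpos : 0 < L := hL0.lt_of_ne (Ne.symm hne)
  have hev : ∀ᶠ t in atTop, L/2 < v t ^ 2 * (t/(1+t^2)) :=
    hL.eventually (eventually_gt_nhds (by linarith))
  obtain ⟨N, hN⟩ := (hev.and (eventually_ge_atTop (0:ℝ))).exists_forall_of_atTop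
  have hbig : ∀ t ∈ Ici N, L ≤ v t ^ 2 := by
    intro t ht
    have h1 := (hN t ht).1
    have h2t := (hN t ht).2
    have hphile : t/(1+t^2) ≤ 1/2 := by
      rw [div_le_iff₀ (by positivity)]
      nlinarith [sq_nonneg (1-t)]
    nlinarith [sq_nonneg (v t), hphi_nonneg t h2t]
  have hle : ENNReal.ofReal L * volume (Ici N) ≤ ∫⁻ t, ENNReal.ofReal (v t ^ 2) := by
    rw [← setLIntegral_const (Ici N) (ENNReal.ofReal L)]
    refine le_trans (lintegral_mono_ae ?_) (setLIntegral_le_lintegral _ _)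
    exact (ae_restrict_iff' measurableSet_Ici).2 (ae_of_all _ fun t ht =>
      ENNReal.ofReal_le_ofReal (hbig t ht))
  rw [Real.volume_Ici, ENNReal.mul_top (by simpa using hLpos)] at hle
  simp [top_le_iff.1 hle] at h2

lemma hasDerivAt_phi (t : ℝ) :
    HasDerivAt (fun t : ℝ => t/(1+t^2)) ((1-t^2)/(1+t^2)^2) t := by
  have h := (hasDerivAt_id t).div (((hasDerivAt_pow 2 t).const_add 1)) (by positivity)
  refine h.congr_deriv ?_
  simp only [id_eq]
  field_simp
  ring

lemma ibp (u u' : ℝ → ℝ) (hu : ∀ t, HasDerivAt u (u' t) t) (hmu' : Measurable u')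
    (h2 : ∫⁻ t, ENNReal.ofReal (u t ^ 2) < ⊤) (h2' : ∫⁻ t, ENNReal.ofReal (u' t ^ 2) < ⊤) :
    Integrable (fun t => 2*u t*u' t*(t/(1+t^2)) + u t^2*((1-t^2)/(1+t^2)^2)) volume ∧
    ∫ t : ℝ, (2*u t*u' t*(t/(1+t^2)) + u t^2*((1-t^2)/(1+t^2)^2)) = 0 := by
  have hu_cont : Continuous u := by
    rw [continuous_iff_continuousAt]; exact fun t => (hu t).continuousAt
  have hphi_cont : Continuous (fun t : ℝ => t/(1+t^2)) :=
    continuous_id.div (by continuity) (fun t => by positivity)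
  have hphi'_cont : Continuous (fun t : ℝ => (1-t^2)/(1+t^2)^2) :=
    (by continuity : Continuous fun t : ℝ => 1-t^2).div (by continuity) (fun t => by positivity)
  have hiu2 : Integrable (fun t => u t ^ 2) := by
    refine ⟨(hu_cont.pow 2).aestronglyMeasurable, ?_⟩
    rw [hasFiniteIntegral_iff_ofReal (ae_of_all _ fun t => sq_nonneg _)]
    exact h2
  have hiu'2 : Integrable (fun t => u' t ^ 2) := by
    refine ⟨((hmu'.pow_const 2).aestronglyMeasurable), ?_⟩
    rw [hasFiniteIntegral_iff_ofReal (ae_of_all _ fun t => sq_nonneg _)]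
    exact h2'
  have hphile : ∀ t : ℝ, |t/(1+t^2)| ≤ 1/2 := by
    intro t
    rw [abs_div, abs_of_pos (by positivity : (0:ℝ) < 1+t^2), div_le_iff₀ (by positivity)]
    nlinarith [abs_nonneg t, sq_abs t, sq_nonneg (1-|t|)]
  have hphi'le : ∀ t : ℝ, |(1-t^2)/(1+t^2)^2| ≤ 1 := by
    intro t
    rw [abs_div, abs_of_pos (by positivity : (0:ℝ) < (1+t^2)^2), div_le_iff₀ (by positivity)]
    have : |1-t^2| ≤ 1+t^2 := by
      rw [abs_le]; constructor <;> nlinarith [sq_nonneg t]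
    nlinarith [sq_nonneg t, abs_nonneg (1-t^2)]
  set G : ℝ → ℝ := fun t => 2*u t*u' t*(t/(1+t^2)) + u t^2*((1-t^2)/(1+t^2)^2) with hG
  have hGmeas : AEStronglyMeasurable G volume := by
    apply Measurable.aestronglyMeasurable
    exact ((((measurable_const.mul hu_cont.measurable).mul hmu').mul
      hphi_cont.measurable).add (((hu_cont.pow 2).measurable).mul hphi'_cont.measurable))
  have hiG : Integrable G := by
    refine Integrable.mono' ((hiu2.add hiu'2).add hiu2) hGmeas (ae_of_all _ fun t => ?_)
    have e1 : |2*u t*u' t*(t/(1+t^2))| ≤ |u t| * |u' t| := by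
      rw [abs_mul]
      have h21 : |2*u t*u' t| = 2*(|u t| * |u' t|) := by
        rw [abs_mul, abs_mul, abs_two]; ring
      rw [h21]
      nlinarith [hphile t, mul_nonneg (abs_nonneg (u t)) (abs_nonneg (u' t)),
        abs_nonneg (t/(1+t^2))]
    have e2 : |u t^2*((1-t^2)/(1+t^2)^2)| ≤ u t^2 := by
      rw [abs_mul, abs_of_nonneg (sq_nonneg (u t))]
      nlinarith [hphi'le t, sq_nonneg (u t), abs_nonneg ((1-t^2)/(1+t^2)^2)]
    rw [Real.norm_eq_abs]
    refine le_trans (abs_add_le _ _) ?_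
    have e3 : |u t| * |u' t| ≤ (u t^2 + u' t^2)/2 := by
      nlinarith [sq_nonneg (|u t| - |u' t|), sq_abs (u t), sq_abs (u' t)]
    simp only [Pi.add_apply]
    linarith [sq_nonneg (u t), sq_nonneg (u' t)]
  refine ⟨hiG, ?_⟩
  set F : ℝ → ℝ := fun t => u t^2 * (t/(1+t^2)) with hFdef
  have hF : ∀ t, HasDerivAt F (G t) t := by
    intro t
    have h := ((hu t).pow 2).mul (hasDerivAt_phi t)
    refine h.congr_deriv ?_
    simp only [hG]
    norm_num
  have hlimT : Tendsto F atTop (nhds (limUnder atTop F)) :=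
    tendsto_limUnder_of_hasDerivAt_of_integrableOn_Ioi (a := 0) (fun x _ => hF x)
      hiG.integrableOn
  have hLT : limUnder atTop F = 0 := limit_zero u h2 _ hlimT
  have hIoi : ∫ t in Ioi (0:ℝ), G t = 0 - F 0 :=
    integral_Ioi_of_hasDerivAt_of_tendsto' (fun x _ => hF x) hiG.integrableOn (hLT ▸ hlimT)
  have hlimB : Tendsto F atBot (nhds (limUnder atBot F)) :=
    tendsto_limUnder_of_hasDerivAt_of_integrableOn_Iic (a := 0) (fun x _ => hF x)
      hiG.integrableOn
  have hneg : Tendsto (fun t => (u (-t))^2 * (t/(1+t^2))) atTop (nhds (-(limUnder atBot F))) := by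
    have h1 : Tendsto (fun t : ℝ => F (-t)) atTop (nhds (limUnder atBot F)) :=
      hlimB.comp tendsto_neg_atTop_atBot
    have h2n := h1.neg
    convert h2n using 2 with t
    show u (-t)^2 * (t/(1+t^2)) = -(u (-t)^2 * ((-t)/(1+(-t)^2)))
    ring
  have h2neg : ∫⁻ t, ENNReal.ofReal ((u (-t))^2) < ⊤ := by
    have := (Measure.measurePreserving_neg (volume : Measure ℝ)).lintegral_comp
      (f := fun a => ENNReal.ofReal (u a^2))
      (ENNReal.measurable_ofReal.comp (hu_cont.pow 2).measurable)
    rw [show (fun t : ℝ => ENNReal.ofReal ((u (-t))^2)) = fun t : ℝ =>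
      (fun a => ENNReal.ofReal (u a^2)) (-t) from rfl]
    rw [this]
    exact h2
  have hLB : limUnder atBot F = 0 := by
    have := limit_zero (fun t => u (-t)) h2neg _ hneg
    linarith
  have hIic : ∫ t in Iic (0:ℝ), G t = F 0 - 0 :=
    integral_Iic_of_hasDerivAt_of_tendsto' (fun x _ => hF x) hiG.integrableOn (hLB ▸ hlimB)
  have := intervalIntegral.integral_Iic_add_Ioi (b := (0:ℝ))
    hiG.integrableOn hiG.integrableOn
  rw [← this, hIoi, hIic]
  ring


lemma hQ2 (s : ℝ) (hs : 0 ≤ s) :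
    0 ≤ 9/10 + 8/5*s + 12/5*s^2 - 12/5*s^3 + 49/10*s^4 + 3*s^6 := by
  nlinarith [sq_nonneg (s - s^2), sq_nonneg s, sq_nonneg (s^2), sq_nonneg (s^3), mul_nonneg hs (sq_nonneg s)]

lemma hQ1 (s : ℝ) (hs : 0 ≤ s) (hs2 : s ≤ 1/2) :
    0 ≤ 13/20 + 11/10*s + 33/20*s^2 - 17/5*s^3 + 83/20*s^4 - 1/2*s^5 + 11/4*s^6 := by
  nlinarith [mul_nonneg (mul_nonneg hs hs) (sub_nonneg.2 hs2), mul_nonneg (mul_nonneg (mul_nonneg (mul_nonneg hs hs) hs) hs) (sub_nonneg.2 hs2), sq_nonneg s, sq_nonneg (s^3), mul_nonneg hs (sq_nonneg s)]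

lemma core (s A B : ℝ) (hs : 0 ≤ s) :
    (if s ≤ 1/2 then A^2/4 else 0)
      ≤ A^2*((1-s^2)/(1+s^2)^2) - 2*A*B*(s/(1+s^2)) + 3*((s/(1+s))^2*A^2)
        + 10*((s/(1+s))^2*B^2) := by
  have hP : (0:ℝ) < 1+s^2 := by positivity
  have hR : (0:ℝ) < 1+s := by linarith
  have key : A^2*((1-s^2)/(1+s^2)^2) - 2*A*B*(s/(1+s^2)) + 3*((s/(1+s))^2*A^2)
        + 10*((s/(1+s))^2*B^2)
      = (A^2*((1-s^2)*(1+s)^2) - 2*A*B*(s*(1+s^2)*(1+s)^2) + 3*(s^2*(1+s^2)^2*A^2)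
          + 10*(s^2*(1+s^2)^2*B^2)) / ((1+s^2)^2*(1+s)^2) := by
    field_simp
  rw [key]
  split_ifs with h
  · rw [div_le_div_iff₀ (by norm_num) (by positivity)]
    nlinarith [sq_nonneg ((1+s)^2*A - 10*s*(1+s^2)*B), mul_nonneg (sq_nonneg A) (hQ1 s hs h)]
  · apply div_nonneg _ (by positivity)
    nlinarith [sq_nonneg ((1+s)^2*A - 10*s*(1+s^2)*B), mul_nonneg (sq_nonneg A) (hQ2 s hs)]


lemma pointwise_main (t a b : ℝ) :
    (if |t| ≤ 1/2 then a^2/4 else 0)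
      ≤ (2*a*b*(t/(1+t^2)) + a^2*((1-t^2)/(1+t^2)^2))
        + (3*((|t|/(1+|t|))^2 * a^2) + 10*((|t|/(1+|t|))^2 * b^2)) := by
  have h := core |t| |a| |b| (abs_nonneg t)
  rw [sq_abs, sq_abs, sq_abs] at h
  have habs : |2*a*b*(t/(1+t^2))| = 2 * |a| * (|b| * (|t|/(1+t^2))) := by
    rw [abs_mul, abs_mul, abs_mul, abs_two, abs_div,
      abs_of_pos (show (0:ℝ) < 1+t^2 by positivity)]
    ring
  have hcross : -(2 * |a| * (|b| * (|t|/(1+t^2)))) ≤ 2*a*b*(t/(1+t^2)) := by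
    rw [← habs]
    exact neg_abs_le _
  nlinarith [h, hcross]

lemma hardy1d (u u' : ℝ → ℝ) (hu : ∀ t, HasDerivAt u (u' t) t) (hmu' : Measurable u')
    (h2 : ∫⁻ t, ENNReal.ofReal (u t ^ 2) < ⊤) (h2' : ∫⁻ t, ENNReal.ofReal (u' t ^ 2) < ⊤) :
    ∫⁻ t, ENNReal.ofReal (u t ^ 2)
      ≤ 40 * ((∫⁻ t, ENNReal.ofReal ((|t|/(1+|t|))^2 * u t ^ 2))
            + ∫⁻ t, ENNReal.ofReal ((|t|/(1+|t|))^2 * u' t ^ 2)) := by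
  have hu_cont : Continuous u := by
    rw [continuous_iff_continuousAt]; exact fun t => (hu t).continuousAt
  have hiu2 : Integrable (fun t => u t ^ 2) := by
    refine ⟨(hu_cont.pow 2).aestronglyMeasurable, ?_⟩
    rw [hasFiniteIntegral_iff_ofReal (ae_of_all _ fun t => sq_nonneg _)]
    exact h2
  have hiu'2 : Integrable (fun t => u' t ^ 2) := by
    refine ⟨((hmu'.pow_const 2).aestronglyMeasurable), ?_⟩
    rw [hasFiniteIntegral_iff_ofReal (ae_of_all _ fun t => sq_nonneg _)]
    exact h2'
  have hw_cont : Continuous (fun t : ℝ => (|t|/(1+|t|))^2) := by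
    apply Continuous.pow
    exact continuous_abs.div (by continuity) (fun t => by positivity)
  have hwle : ∀ t : ℝ, (|t|/(1+|t|))^2 ≤ 1 := by
    intro t
    have h1 : |t|/(1+|t|) ≤ 1 := by
      rw [div_le_one (by positivity)]; linarith [abs_nonneg t]
    nlinarith [div_nonneg (abs_nonneg t) (show (0:ℝ) ≤ 1+|t| by positivity)]
  have hwnn : ∀ t : ℝ, 0 ≤ (|t|/(1+|t|))^2 := fun t => sq_nonneg _
  have hiw : Integrable (fun t => (|t|/(1+|t|))^2 * u t ^ 2) := by
    refine hiu2.mono' (hw_cont.mul (hu_cont.pow 2)).aestronglyMeasurable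
      (ae_of_all _ fun t => ?_)
    rw [Real.norm_eq_abs, abs_of_nonneg (mul_nonneg (hwnn t) (sq_nonneg _))]
    nlinarith [hwle t, hwnn t, sq_nonneg (u t)]
  have hiw' : Integrable (fun t => (|t|/(1+|t|))^2 * u' t ^ 2) := by
    refine hiu'2.mono' (hw_cont.measurable.mul (hmu'.pow_const 2)).aestronglyMeasurable
      (ae_of_all _ fun t => ?_)
    rw [Real.norm_eq_abs, abs_of_nonneg (mul_nonneg (hwnn t) (sq_nonneg _))]
    nlinarith [hwle t, hwnn t, sq_nonneg (u' t)]
  have hind : Integrable (fun t => if |t| ≤ 1/2 then u t ^2/4 else 0) := by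
    refine hiu2.mono' ?_ (ae_of_all _ fun t => ?_)
    · apply Measurable.aestronglyMeasurable
      exact Measurable.ite (measurableSet_le continuous_abs.measurable measurable_const)
        (((hu_cont.pow 2).measurable).div_const 4) measurable_const
    · rw [Real.norm_eq_abs]
      by_cases h : |t| ≤ 1/2
      · rw [if_pos h, abs_of_nonneg (by positivity)]
        linarith [sq_nonneg (u t)]
      · rw [if_neg h, abs_zero]
        exact sq_nonneg _
  obtain ⟨hiG, hIBP⟩ := ibp u u' hu hmu' h2 h2'
  have hirest : Integrable (fun t => 3*((|t|/(1+|t|))^2 * u t ^ 2)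
      + 10*((|t|/(1+|t|))^2 * u' t ^ 2)) :=
    (hiw.const_mul 3).add (hiw'.const_mul 10)
  have hiRHS : Integrable (fun t => (2*u t*u' t*(t/(1+t^2)) + u t ^2*((1-t^2)/(1+t^2)^2))
      + (3*((|t|/(1+|t|))^2 * u t ^ 2) + 10*((|t|/(1+|t|))^2 * u' t ^ 2))) :=
    hiG.add hirest
  have h1 : ∫ t, (if |t| ≤ 1/2 then u t ^2/4 else 0)
      ≤ 3 * (∫ t, ((|t|/(1+|t|))^2 * u t ^ 2)) + 10 * (∫ t, ((|t|/(1+|t|))^2 * u' t ^ 2)) := by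
    have hmono := integral_mono hind hiRHS (fun t => pointwise_main t (u t) (u' t))
    have e1 : ∫ t, ((2*u t*u' t*(t/(1+t^2)) + u t ^2*((1-t^2)/(1+t^2)^2))
        + (3*((|t|/(1+|t|))^2 * u t ^ 2) + 10*((|t|/(1+|t|))^2 * u' t ^ 2)))
        = (∫ t, (2*u t*u' t*(t/(1+t^2)) + u t ^2*((1-t^2)/(1+t^2)^2)))
          + ∫ t, (3*((|t|/(1+|t|))^2 * u t ^ 2) + 10*((|t|/(1+|t|))^2 * u' t ^ 2)) :=
      integral_add hiG hirest
    have e2 : ∫ t, (3*((|t|/(1+|t|))^2 * u t ^ 2) + 10*((|t|/(1+|t|))^2 * u' t ^ 2))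
        = (∫ t, 3*((|t|/(1+|t|))^2 * u t ^ 2)) + ∫ t, 10*((|t|/(1+|t|))^2 * u' t ^ 2) :=
      integral_add (hiw.const_mul 3) (hiw'.const_mul 10)
    rw [e1, e2, hIBP, integral_const_mul, integral_const_mul] at hmono
    linarith
  have h2step : ∫ t, u t ^ 2
      ≤ 4 * (∫ t, (if |t| ≤ 1/2 then u t ^2/4 else 0)) + 9 * (∫ t, ((|t|/(1+|t|))^2 * u t ^ 2)) := by
    have hiRHS2 : Integrable (fun t => 4 * (if |t| ≤ 1/2 then u t ^2/4 else 0)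
        + 9 * ((|t|/(1+|t|))^2 * u t ^ 2)) := (hind.const_mul 4).add (hiw.const_mul 9)
    have hpt2 : ∀ t, u t ^ 2 ≤ 4 * (if |t| ≤ 1/2 then u t ^2/4 else 0)
        + 9 * ((|t|/(1+|t|))^2 * u t ^ 2) := by
      intro t
      by_cases h : |t| ≤ 1/2
      · rw [if_pos h]
        nlinarith [mul_nonneg (hwnn t) (sq_nonneg (u t))]
      · rw [if_neg h]
        push_neg at h
        have h9 : 1 ≤ 9 * (|t|/(1+|t|))^2 := by
          have hd : (0:ℝ) < (1+|t|)^2 := by positivity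
          rw [div_pow, ← mul_div_assoc, le_div_iff₀ hd, one_mul]
          nlinarith [abs_nonneg t, h.le]
        nlinarith [sq_nonneg (u t)]
    have hmono := integral_mono hiu2 hiRHS2 hpt2
    have e1 : ∫ t, (4 * (if |t| ≤ 1/2 then u t ^2/4 else 0)
        + 9 * ((|t|/(1+|t|))^2 * u t ^ 2))
        = (∫ t, 4 * (if |t| ≤ 1/2 then u t ^2/4 else 0))
          + ∫ t, 9 * ((|t|/(1+|t|))^2 * u t ^ 2) :=
      integral_add (hind.const_mul 4) (hiw.const_mul 9)
    rw [e1, integral_const_mul, integral_const_mul] at hmono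
    linarith
  have hfinal : ∫ t, u t ^ 2
      ≤ 40 * ((∫ t, ((|t|/(1+|t|))^2 * u t ^ 2)) + ∫ t, ((|t|/(1+|t|))^2 * u' t ^ 2)) := by
    have hnn1 : 0 ≤ ∫ t, ((|t|/(1+|t|))^2 * u t ^ 2) :=
      integral_nonneg fun t => mul_nonneg (hwnn t) (sq_nonneg _)
    have hnn2 : 0 ≤ ∫ t, ((|t|/(1+|t|))^2 * u' t ^ 2) :=
      integral_nonneg fun t => mul_nonneg (hwnn t) (sq_nonneg _)
    linarith
  calc ∫⁻ t, ENNReal.ofReal (u t ^ 2)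
      = ENNReal.ofReal (∫ t, u t ^ 2) :=
        (ofReal_integral_eq_lintegral_ofReal hiu2 (ae_of_all _ fun t => sq_nonneg _)).symm
    _ ≤ ENNReal.ofReal (40 * ((∫ t, ((|t|/(1+|t|))^2 * u t ^ 2))
          + ∫ t, ((|t|/(1+|t|))^2 * u' t ^ 2))) := ENNReal.ofReal_le_ofReal hfinal
    _ = 40 * ((∫⁻ t, ENNReal.ofReal ((|t|/(1+|t|))^2 * u t ^ 2))
          + ∫⁻ t, ENNReal.ofReal ((|t|/(1+|t|))^2 * u' t ^ 2)) := by
        rw [ENNReal.ofReal_mul (by norm_num), ENNReal.ofReal_add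
          (integral_nonneg fun t => mul_nonneg (hwnn t) (sq_nonneg _))
          (integral_nonneg fun t => mul_nonneg (hwnn t) (sq_nonneg _)),
          ofReal_integral_eq_lintegral_ofReal hiw
            (ae_of_all _ fun t => mul_nonneg (hwnn t) (sq_nonneg _)),
          ofReal_integral_eq_lintegral_ofReal hiw'
            (ae_of_all _ fun t => mul_nonneg (hwnn t) (sq_nonneg _)),
          ENNReal.ofReal_ofNat]


lemma enorm_sq_eq {F : Type*} [NormedAddCommGroup F] (v : F) :
    (‖v‖₊ : ℝ≥0∞) ^ (2:ℝ) = ENNReal.ofReal (‖v‖^2) := by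
  rw [show (2:ℝ) = ((2:ℕ):ℝ) by norm_num, ENNReal.rpow_natCast,
    ← enorm_eq_nnnorm, ← ofReal_norm, ← ENNReal.ofReal_pow (norm_nonneg v)]

lemma eLpNorm_two_eq {α : Type*} [MeasurableSpace α] (μ : Measure α)
    {F : Type*} [NormedAddCommGroup F] (f : α → F) :
    eLpNorm f 2 μ = (∫⁻ x, ENNReal.ofReal (‖f x‖^2) ∂μ) ^ (1/2 : ℝ) := by
  rw [eLpNorm_eq_lintegral_rpow_enorm_toReal (by norm_num) (by norm_num)]
  rw [show ((2:ℝ≥0∞).toReal) = (2:ℝ) by norm_num]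
  congr 1
  exact lintegral_congr fun x => enorm_sq_eq (f x)

lemma coord_le_norm {m : ℕ} (x : EuclideanSpace ℝ (Fin m)) (i : Fin m) : |x i| ≤ ‖x‖ := by
  rw [EuclideanSpace.norm_eq]
  rw [show |x i| = Real.sqrt (‖x i‖^2) by
    rw [Real.sqrt_sq_eq_abs, Real.norm_eq_abs, abs_abs]]
  apply Real.sqrt_le_sqrt
  exact Finset.single_le_sum (fun j _ => sq_nonneg ‖x j‖) (Finset.mem_univ i)

lemma rpow_two_eq (x : ℝ≥0∞) : x ^ (2:ℝ) = x ^ (2:ℕ) := by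
  rw [show (2:ℝ) = ((2:ℕ):ℝ) by norm_num, ENNReal.rpow_natCast]

/-- Hardy-type inequality: for `g ∈ H¹(ℝ^d)`, the `L²` norm of `g` is controlled by the
weighted `L²` norms of `g` and `∇g` with weight `|x|/(1+|x|)`, with a constant depending
only on the dimension. -/
theorem stmt_0 (d : ℕ) (hd : 1 ≤ d) :
    ∃ C : ℝ, 0 < C ∧
      ∀ g : EuclideanSpace ℝ (Fin d) → ℝ,
        MemLp g 2 volume → Differentiable ℝ g →
        MemLp (fun x => fderiv ℝ g x) 2 volume →
        eLpNorm g 2 volume ≤ ENNReal.ofReal C *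
          (eLpNorm (fun x => (‖x‖ / (1 + ‖x‖)) * g x) 2 volume
            + eLpNorm (fun x => (‖x‖ / (1 + ‖x‖)) * ‖fderiv ℝ g x‖) 2 volume) := by
  refine ⟨7, by norm_num, ?_⟩
  obtain ⟨n, rfl⟩ : ∃ n, d = n + 1 := ⟨d - 1, (Nat.succ_pred_eq_of_pos hd).symm⟩
  intro g hg2 hgdiff hgD2
  have hgc : Continuous g := hgdiff.continuous
  have hDm : Measurable (fderiv ℝ g) := measurable_fderiv ℝ g
  have hWc : Continuous (fun x : EuclideanSpace ℝ (Fin (n+1)) => ‖x‖/(1+‖x‖)) :=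
    continuous_norm.div (by continuity) (fun x => by positivity)
  have hf0 : Measurable fun x : EuclideanSpace ℝ (Fin (n+1)) => ENNReal.ofReal (g x ^ 2) :=
    ENNReal.measurable_ofReal.comp (hgc.pow 2).measurable
  have hf1 : Measurable fun x : EuclideanSpace ℝ (Fin (n+1)) =>
      ENNReal.ofReal ((‖x‖/(1+‖x‖))^2 * g x ^ 2) :=
    ENNReal.measurable_ofReal.comp ((hWc.pow 2).measurable.mul (hgc.pow 2).measurable)
  have hf2 : Measurable fun x : EuclideanSpace ℝ (Fin (n+1)) =>
      ENNReal.ofReal ((‖x‖/(1+‖x‖))^2 * ‖fderiv ℝ g x‖ ^ 2) :=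
    ENNReal.measurable_ofReal.comp ((hWc.pow 2).measurable.mul (hDm.norm.pow_const 2))
  set Φ : ℝ × (Fin n → ℝ) → EuclideanSpace ℝ (Fin (n+1)) :=
    fun p => (MeasurableEquiv.toLp 2 (Fin (n+1) → ℝ))
      ((MeasurableEquiv.piFinSuccAbove (fun _ : Fin (n+1) => ℝ) 0).symm p) with hPhi
  have hPhim : Measurable Φ :=
    (MeasurableEquiv.measurable _).comp (MeasurableEquiv.measurable _)
  have hmp : MeasurePreserving Φ
      ((volume : Measure ℝ).prod (volume : Measure (Fin n → ℝ))) volume := by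
    have m1 := (EuclideanSpace.volume_preserving_symm_measurableEquiv_toLp (Fin (n+1))).symm
    have m2 := (measurePreserving_piFinSuccAbove (fun _ : Fin (n+1) => (volume : Measure ℝ)) 0).symm
    simp only [← volume_pi] at m2
    exact m1.comp m2
  have hcomp : ∀ (f : EuclideanSpace ℝ (Fin (n+1)) → ℝ≥0∞), Measurable f →
      ∫⁻ x, f x = ∫⁻ z : Fin n → ℝ, ∫⁻ t : ℝ, f (Φ (t, z)) := by
    intro f hf
    rw [← hmp.lintegral_comp hf]
    exact lintegral_prod_symm _ (hf.comp hPhim).aemeasurable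
  set E₁ : EuclideanSpace ℝ (Fin (n+1)) := EuclideanSpace.single 0 1 with hE1
  set X : (Fin n → ℝ) → ℝ → EuclideanSpace ℝ (Fin (n+1)) := fun z t => Φ (t, z) with hXdef
  have hXkey : ∀ z (s : ℝ), X z s
      = (WithLp.equiv 2 (Fin (n+1) → ℝ)).symm (Fin.insertNth 0 s z) := fun _ _ => rfl
  have hXeq : ∀ z t, X z t = X z 0 + t • E₁ := by
    intro z t
    rw [hXkey z t, hXkey z 0]
    ext i
    simp only [PiLp.add_apply, PiLp.smul_apply, WithLp.equiv_symm_apply, WithLp.ofLp_toLp]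
    simp only [smul_eq_mul]
    induction i using Fin.cases with
    | zero => simp [hE1, EuclideanSpace.single_apply]
    | succ j =>
      rw [show (j.succ) = (0 : Fin (n+1)).succAbove j from rfl,
        Fin.insertNth_apply_succAbove, Fin.insertNth_apply_succAbove]
      simp [hE1, EuclideanSpace.single_apply, Fin.succ_ne_zero]
  have hXd : ∀ z t, HasDerivAt (X z) E₁ t := by
    intro z t
    have h : X z = fun s => X z 0 + s • E₁ := funext (hXeq z)
    rw [h]
    have h2 := ((hasDerivAt_id t).smul_const E₁).const_add (X z 0)
    simpa using h2
  have hXc : ∀ z, Continuous (X z) := by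
    intro z
    have h : X z = fun s => X z 0 + s • E₁ := funext (hXeq z)
    rw [h]
    exact continuous_const.add (continuous_id.smul continuous_const)
  have hu : ∀ z t, HasDerivAt (fun s => g (X z s)) (fderiv ℝ g (X z t) E₁) t := fun z t =>
    (hgdiff (X z t)).hasFDerivAt.comp_hasDerivAt t (hXd z t)
  have habs : ∀ z t, |t| ≤ ‖X z t‖ := by
    intro z t
    have h0 : X z t 0 = t := by
      rw [hXkey z t, WithLp.equiv_symm_apply, PiLp.toLp_apply]
      simp
    rw [← h0]
    exact coord_le_norm _ 0
  have hWmono : ∀ z t, (|t|/(1+|t|))^2 ≤ (‖X z t‖/(1+‖X z t‖))^2 := by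
    intro z t
    have h := habs z t
    have h2 : |t|/(1+|t|) ≤ ‖X z t‖/(1+‖X z t‖) := by
      rw [div_le_div_iff₀ (by positivity) (by positivity)]
      nlinarith [abs_nonneg t, norm_nonneg (X z t)]
    exact pow_le_pow_left₀ (by positivity) h2 2
  have hDb : ∀ z t, (fderiv ℝ g (X z t) E₁)^2 ≤ ‖fderiv ℝ g (X z t)‖^2 := by
    intro z t
    have h := (fderiv ℝ g (X z t)).le_opNorm E₁
    rw [hE1, EuclideanSpace.norm_single, norm_one, mul_one] at h
    have h2 : |fderiv ℝ g (X z t) E₁| ≤ ‖fderiv ℝ g (X z t)‖ := by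
      rwa [← Real.norm_eq_abs]
    nlinarith [abs_nonneg (fderiv ℝ g (X z t) E₁), sq_abs (fderiv ℝ g (X z t) E₁)]
  -- finiteness
  have hfin0 : ∫⁻ x, ENNReal.ofReal (g x ^ 2) < ⊤ := by
    have h := hg2.2
    rw [eLpNorm_two_eq] at h
    rw [show (fun x : EuclideanSpace ℝ (Fin (n+1)) => ENNReal.ofReal (‖g x‖^2))
        = fun x => ENNReal.ofReal (g x ^ 2) from
      funext fun x => by rw [Real.norm_eq_abs, sq_abs]] at h
    by_contra hc
    rw [not_lt, top_le_iff] at hc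
    rw [hc, ENNReal.top_rpow_of_pos (by norm_num)] at h
    exact absurd h (by simp)
  have hfinD : ∫⁻ x, ENNReal.ofReal (‖fderiv ℝ g x‖ ^ 2) < ⊤ := by
    have h := hgD2.2
    rw [eLpNorm_two_eq] at h
    by_contra hc
    rw [not_lt, top_le_iff] at hc
    rw [hc, ENNReal.top_rpow_of_pos (by norm_num)] at h
    exact absurd h (by simp)
  have hfD : Measurable fun x : EuclideanSpace ℝ (Fin (n+1)) =>
      ENNReal.ofReal (‖fderiv ℝ g x‖ ^ 2) :=
    ENNReal.measurable_ofReal.comp (hDm.norm.pow_const 2)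
  -- ae slice finiteness
  have hm0 : Measurable fun z : Fin n → ℝ => ∫⁻ t : ℝ, ENNReal.ofReal (g (X z t) ^ 2) :=
    (hf0.comp hPhim).lintegral_prod_left'
  have hmD : Measurable fun z : Fin n → ℝ =>
      ∫⁻ t : ℝ, ENNReal.ofReal (‖fderiv ℝ g (X z t)‖ ^ 2) :=
    (hfD.comp hPhim).lintegral_prod_left'
  have hae0 : ∀ᵐ z ∂(volume : Measure (Fin n → ℝ)),
      ∫⁻ t : ℝ, ENNReal.ofReal (g (X z t) ^ 2) < ⊤ := by
    apply ae_lt_top hm0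
    rw [← hcomp _ hf0]
    exact hfin0.ne
  have haeD : ∀ᵐ z ∂(volume : Measure (Fin n → ℝ)),
      ∫⁻ t : ℝ, ENNReal.ofReal (‖fderiv ℝ g (X z t)‖ ^ 2) < ⊤ := by
    apply ae_lt_top hmD
    rw [← hcomp _ hfD]
    exact hfinD.ne
  have hslice : ∀ᵐ z ∂(volume : Measure (Fin n → ℝ)),
      ∫⁻ t : ℝ, ENNReal.ofReal (g (X z t) ^ 2)
        ≤ 40 * ((∫⁻ t : ℝ, ENNReal.ofReal ((‖X z t‖/(1+‖X z t‖))^2 * g (X z t) ^ 2))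
            + ∫⁻ t : ℝ, ENNReal.ofReal ((‖X z t‖/(1+‖X z t‖))^2 * ‖fderiv ℝ g (X z t)‖ ^ 2)) := by
    filter_upwards [hae0, haeD] with z hz0 hzD
    have hu'm : Measurable fun t => fderiv ℝ g (X z t) E₁ :=
      (measurable_fderiv_apply_const ℝ g E₁).comp (hXc z).measurable
    have hD2z : ∫⁻ t, ENNReal.ofReal ((fderiv ℝ g (X z t) E₁) ^ 2) < ⊤ :=
      lt_of_le_of_lt (lintegral_mono fun t => ENNReal.ofReal_le_ofReal (hDb z t)) hzD
    have h40 := hardy1d (fun t => g (X z t)) (fun t => fderiv ℝ g (X z t) E₁)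
      (hu z) hu'm hz0 hD2z
    refine h40.trans ?_
    gcongr 40 * (?_ + ?_)
    · refine lintegral_mono fun t => ENNReal.ofReal_le_ofReal ?_
      exact mul_le_mul_of_nonneg_right (hWmono z t) (sq_nonneg _)
    · refine lintegral_mono fun t => ENNReal.ofReal_le_ofReal ?_
      exact mul_le_mul (hWmono z t) (hDb z t) (sq_nonneg _) (sq_nonneg _)
  have main : ∫⁻ x, ENNReal.ofReal (g x ^ 2)
      ≤ 40 * ((∫⁻ x, ENNReal.ofReal ((‖x‖/(1+‖x‖))^2 * g x ^ 2))
          + ∫⁻ x, ENNReal.ofReal ((‖x‖/(1+‖x‖))^2 * ‖fderiv ℝ g x‖ ^ 2)) := by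
    rw [hcomp _ hf0, hcomp _ hf1, hcomp _ hf2]
    calc ∫⁻ z : Fin n → ℝ, ∫⁻ t : ℝ, ENNReal.ofReal (g (X z t) ^ 2)
        ≤ ∫⁻ z : Fin n → ℝ, 40 * ((∫⁻ t : ℝ, ENNReal.ofReal ((‖X z t‖/(1+‖X z t‖))^2 * g (X z t) ^ 2))
            + ∫⁻ t : ℝ, ENNReal.ofReal ((‖X z t‖/(1+‖X z t‖))^2 * ‖fderiv ℝ g (X z t)‖ ^ 2)) :=
          lintegral_mono_ae hslice
      _ = 40 * ((∫⁻ z : Fin n → ℝ, ∫⁻ t : ℝ, ENNReal.ofReal ((‖X z t‖/(1+‖X z t‖))^2 * g (X z t) ^ 2))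
            + ∫⁻ z : Fin n → ℝ, ∫⁻ t : ℝ, ENNReal.ofReal ((‖X z t‖/(1+‖X z t‖))^2 * ‖fderiv ℝ g (X z t)‖ ^ 2)) := by
          have hm1 : Measurable fun z : Fin n → ℝ =>
              ∫⁻ t : ℝ, ENNReal.ofReal ((‖X z t‖/(1+‖X z t‖))^2 * g (X z t) ^ 2) :=
            (hf1.comp hPhim).lintegral_prod_left'
          rw [lintegral_const_mul' _ _ (by norm_num), lintegral_add_left hm1]
  -- eLpNorm algebra
  set a := eLpNorm (fun x : EuclideanSpace ℝ (Fin (n+1)) => (‖x‖ / (1 + ‖x‖)) * g x) 2 volume with hadef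
  set b := eLpNorm (fun x : EuclideanSpace ℝ (Fin (n+1)) => (‖x‖ / (1 + ‖x‖)) * ‖fderiv ℝ g x‖) 2 volume with hbdef
  have ha : a = (∫⁻ x, ENNReal.ofReal ((‖x‖/(1+‖x‖))^2 * g x ^ 2)) ^ (1/2:ℝ) := by
    rw [hadef, eLpNorm_two_eq]
    congr 1
    refine lintegral_congr fun x => ?_
    congr 1
    rw [Real.norm_eq_abs, sq_abs]
    ring
  have hb : b = (∫⁻ x, ENNReal.ofReal ((‖x‖/(1+‖x‖))^2 * ‖fderiv ℝ g x‖ ^ 2)) ^ (1/2:ℝ) := by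
    rw [hbdef, eLpNorm_two_eq]
    congr 1
    refine lintegral_congr fun x => ?_
    congr 1
    rw [Real.norm_eq_abs, sq_abs]
    ring
  have hS1 : (∫⁻ x, ENNReal.ofReal ((‖x‖/(1+‖x‖))^2 * g x ^ 2)) = a ^ (2:ℝ) := by
    rw [ha, ← ENNReal.rpow_mul]
    norm_num
  have hS2 : (∫⁻ x, ENNReal.ofReal ((‖x‖/(1+‖x‖))^2 * ‖fderiv ℝ g x‖ ^ 2)) = b ^ (2:ℝ) := by
    rw [hb, ← ENNReal.rpow_mul]
    norm_num
  have hgnorm : eLpNorm g 2 volume = (∫⁻ x, ENNReal.ofReal (g x ^ 2)) ^ (1/2:ℝ) := by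
    rw [eLpNorm_two_eq]
    congr 1
    refine lintegral_congr fun x => ?_
    rw [Real.norm_eq_abs, sq_abs]
  rw [hgnorm, ENNReal.ofReal_ofNat]
  calc (∫⁻ x, ENNReal.ofReal (g x ^ 2)) ^ (1/2:ℝ)
      ≤ (40 * ((∫⁻ x, ENNReal.ofReal ((‖x‖/(1+‖x‖))^2 * g x ^ 2))
          + ∫⁻ x, ENNReal.ofReal ((‖x‖/(1+‖x‖))^2 * ‖fderiv ℝ g x‖ ^ 2))) ^ (1/2:ℝ) :=
        ENNReal.rpow_le_rpow main (by norm_num)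
    _ ≤ (49 * (a+b) ^ (2:ℝ)) ^ (1/2:ℝ) := by
        apply ENNReal.rpow_le_rpow _ (by norm_num)
        rw [hS1, hS2, rpow_two_eq a, rpow_two_eq b, rpow_two_eq (a+b)]
        have hab : a^(2:ℕ) + b^(2:ℕ) ≤ (a+b)^(2:ℕ) := by
          have hexp : (a+b)^(2:ℕ) = a^(2:ℕ) + (2*a*b + b^(2:ℕ)) := by ring
          rw [hexp]
          exact add_le_add le_rfl le_add_self
        calc 40 * (a^(2:ℕ) + b^(2:ℕ)) ≤ 49 * (a^(2:ℕ) + b^(2:ℕ)) := by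
              gcongr
              norm_num
          _ ≤ 49 * (a+b)^(2:ℕ) := by gcongr
    _ = 7 * (a+b) := by
        rw [ENNReal.mul_rpow_of_nonneg _ _ (by norm_num), ← ENNReal.rpow_mul]
        norm_num
        rw [show (49:ℝ≥0∞) = (7:ℝ≥0∞)^(2:ℕ) by norm_num, ← ENNReal.rpow_natCast,
          ← ENNReal.rpow_mul]
        norm_num
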